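/- Let p be a prime and n a natural number. Give the variables of MvPolynomial (Fin 2 × ℕ) ℤ the weights w(b, i) = p^i. Then the n-th Witt addition polynomial wittAdd p n is weighted homogeneous of degree p^n, and the n-th Witt multiplication polynomial wittMul p n is weighted homogeneous of degree 2·p^n, with respect to these weights. -/

import Mathlib

open MvPolynomial WittVector Finset

namespace WittHomogAux

variable {σ τ R S : Type*} [CommRing R] [CommRing S]

theorem IsWH.pow {w : σ → ℕ} {φ : MvPolynomial σ R} {m : ℕ}
    (h : IsWeightedHomogeneous w φ m) (k : ℕ) :
    IsWeightedHomogeneous w (φ ^ k) (k * m) := by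
  induction k with
  | zero => simpa using isWeightedHomogeneous_one (R := R) w
  | succ k ih =>
    rw [pow_succ, add_mul, one_mul]
    exact ih.mul h

theorem IsWH.neg {w : σ → ℕ} {φ : MvPolynomial σ R} {m : ℕ}
    (h : IsWeightedHomogeneous w φ m) : IsWeightedHomogeneous w (-φ) m := by
  rw [← mem_weightedHomogeneousSubmodule R] at h ⊢
  exact Submodule.neg_mem _ h

theorem IsWH.sub {w : σ → ℕ} {φ ψ : MvPolynomial σ R} {m : ℕ}
    (h : IsWeightedHomogeneous w φ m) (h' : IsWeightedHomogeneous w ψ m) :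
    IsWeightedHomogeneous w (φ - ψ) m := by
  rw [sub_eq_add_neg]; exact h.add (IsWH.neg h')

theorem IsWH.rename {w : τ → ℕ} {φ : MvPolynomial σ R} {m : ℕ} (f : σ → τ)
    (hf : Function.Injective f)
    (h : IsWeightedHomogeneous (w ∘ f) φ m) :
    IsWeightedHomogeneous w (MvPolynomial.rename f φ) m := by
  intro d hd
  obtain ⟨u, rfl, hu⟩ := coeff_rename_ne_zero f φ d hd
  have := h hu
  rw [← this]
  rw [Finsupp.weight_apply, Finsupp.weight_apply]
  exact Finsupp.sum_mapDomain_index (by simp) (by intro a b c; rw [add_smul])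

theorem wittPolynomial_isWH (p : ℕ) (n : ℕ) :
    IsWeightedHomogeneous (fun i : ℕ => p ^ i) (wittPolynomial p R n) (p ^ n) := by
  rw [wittPolynomial_eq_sum_C_mul_X_pow]
  apply IsWeightedHomogeneous.sum
  intro i hi
  rw [mem_range, Nat.lt_succ_iff] at hi
  have : p ^ n = 0 + p ^ (n - i) * p ^ i := by
    rw [zero_add, ← pow_add, Nat.sub_add_cancel hi]
  rw [this]
  exact (isWeightedHomogeneous_C _ _).mul
    (IsWH.pow (isWeightedHomogeneous_X _ _ _) _)

theorem xInTermsOfW_isWH (p : ℕ) [hp : Fact p.Prime] [Invertible (p : R)] (n : ℕ) :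
    IsWeightedHomogeneous (fun i : ℕ => p ^ i) (xInTermsOfW p R n) (p ^ n) := by
  induction n using Nat.strong_induction_on with
  | _ n ih =>
    rw [xInTermsOfW_eq]
    have h1 : IsWeightedHomogeneous (fun i : ℕ => p ^ i)
        ((X n : MvPolynomial ℕ R) -
          ∑ i ∈ range n, C ((p : R) ^ i) * xInTermsOfW p R i ^ p ^ (n - i)) (p ^ n) := by
      apply IsWH.sub (isWeightedHomogeneous_X _ _ _)
      apply IsWeightedHomogeneous.sum
      intro i hi
      rw [mem_range] at hi
      have : p ^ n = 0 + p ^ (n - i) * p ^ i := by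
        rw [zero_add, ← pow_add, Nat.sub_add_cancel hi.le]
      rw [this]
      exact (isWeightedHomogeneous_C _ _).mul (IsWH.pow (ih i hi) _)
    have := h1.mul (isWeightedHomogeneous_C (fun i : ℕ => p ^ i) ((⅟(p : R)) ^ n))
    simpa using this

/-- composition lemma for `bind₁` -/
theorem IsWH.bind₁ {w : τ → ℕ} {u : σ → ℕ} (f : σ → MvPolynomial τ R)
    (hf : ∀ i, IsWeightedHomogeneous w (f i) (u i))
    {φ : MvPolynomial σ R} {m : ℕ} (h : IsWeightedHomogeneous u φ m) :
    IsWeightedHomogeneous w (MvPolynomial.bind₁ f φ) m := by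
  conv_lhs => rw [φ.as_sum]
  rw [map_sum]
  apply IsWeightedHomogeneous.sum
  intro d hd
  have hdm : (Finsupp.weight u) d = m := h (mem_support_iff.mp hd)
  rw [bind₁_monomial]
  have : m = 0 + (Finsupp.weight u) d := by rw [zero_add, hdm]
  rw [this]
  apply (isWeightedHomogeneous_C _ _).mul
  rw [Finsupp.weight_apply, Finsupp.sum]
  apply IsWeightedHomogeneous.prod
  intro i _
  simpa [mul_comm] using IsWH.pow (hf i) (d i)

theorem IsWH.of_map (f : R →+* S) (hf : Function.Injective f)
    {w : σ → ℕ} {φ : MvPolynomial σ R} {m : ℕ}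
    (h : IsWeightedHomogeneous w (MvPolynomial.map f φ) m) :
    IsWeightedHomogeneous w φ m := by
  intro d hd
  apply h
  rw [coeff_map]
  intro hc
  exact hd (hf (by simpa using hc))

theorem IsWH.smul_weight {w : σ → ℕ} {φ : MvPolynomial σ R} {m c : ℕ}
    (h : IsWeightedHomogeneous w φ m) :
    IsWeightedHomogeneous (fun i => c * w i) φ (c * m) := by
  intro d hd
  have := h hd
  rw [Finsupp.weight_apply] at this ⊢
  rw [← this, Finsupp.sum, Finsupp.sum, Finset.mul_sum]
  exact Finset.sum_congr rfl fun i _ => by ring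

theorem wittStructureRat_isWH (p : ℕ) [hp : Fact p.Prime] {idx : Type*}
    (Φ : MvPolynomial idx ℚ) (c : ℕ)
    (hΦ : IsWeightedHomogeneous (fun _ : idx => 1) Φ c) (n : ℕ) :
    IsWeightedHomogeneous (fun bi : idx × ℕ => p ^ bi.2)
      (wittStructureRat p Φ n) (c * p ^ n) := by
  rw [wittStructureRat]
  apply IsWH.bind₁ (u := fun k : ℕ => c * p ^ k)
  · intro k
    apply IsWH.bind₁ (u := fun _ : idx => p ^ k) _ _ (by simpa [mul_comm] using IsWH.smul_weight (c := p ^ k) hΦ)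
    intro i
    apply IsWH.rename _ (Prod.mk_right_injective i)
    exact wittPolynomial_isWH p k
  · exact IsWH.smul_weight (xInTermsOfW_isWH p (R := ℚ) n)

end WittHomogAux

theorem wittAdd_wittMul_weighted_homogeneous (p : ℕ) [hp : Fact p.Prime] (n : ℕ) :
    MvPolynomial.IsWeightedHomogeneous (fun bi : Fin 2 × ℕ => p ^ bi.2)
      (WittVector.wittAdd p n) (p ^ n) ∧
    MvPolynomial.IsWeightedHomogeneous (fun bi : Fin 2 × ℕ => p ^ bi.2)
      (WittVector.wittMul p n) (2 * p ^ n) := by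
  constructor
  · apply WittHomogAux.IsWH.of_map (Int.castRingHom ℚ)
      Int.cast_injective
    rw [WittVector.wittAdd, map_wittStructureInt]
    have h1 : p ^ n = 1 * p ^ n := (one_mul _).symm
    rw [h1]
    apply WittHomogAux.wittStructureRat_isWH
    simpa using (MvPolynomial.isWeightedHomogeneous_X ℚ
        (fun _ : Fin 2 => 1) (0 : Fin 2)).add
      (MvPolynomial.isWeightedHomogeneous_X ℚ (fun _ : Fin 2 => 1) (1 : Fin 2))
  · apply WittHomogAux.IsWH.of_map (Int.castRingHom ℚ)
      Int.cast_injective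
    rw [WittVector.wittMul, map_wittStructureInt]
    apply WittHomogAux.wittStructureRat_isWH
    have := (MvPolynomial.isWeightedHomogeneous_X ℚ
        (fun _ : Fin 2 => 1) (0 : Fin 2)).mul
      (MvPolynomial.isWeightedHomogeneous_X ℚ (fun _ : Fin 2 => 1) (1 : Fin 2))
    simpa [two_mul] using this
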